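/- Let 𝒜 be a family of finite subsets of ω₁ closed under subsets and containing all singletons such that any finite set all of whose two-element subsets lie in 𝒜 is in 𝒜. Suppose that for every uncountable pairwise disjoint family of finite subsets of ω₁ there are two distinct members A, B with A ⊗ B ⊆ 𝒜. Then for every uncountable family {B_ξ : ξ < ω₁} of pairwise disjoint sets in 𝒜, there is an infinite set X ⊆ ω₁ such that every finite subset of ⋃_{ξ∈X} B_ξ belongs to 𝒜. -/

import Mathlib

noncomputable section

/-- The set `ω₁` of countable ordinals, as a type. -/
abbrev Omega1 : Type := (Ordinal.omega 1).ToType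

/-- `‖x‖_𝒜 = sup_{A ∈ 𝒜} sqrt (Σ_{α ∈ A} x(α)²)`. -/
def normA (𝒜 : Set (Finset Omega1)) (x : Omega1 → ℝ) : ℝ :=
  sSup {r : ℝ | ∃ A ∈ 𝒜, r = Real.sqrt (∑ α ∈ A, (x α) ^ 2)}

/-- The supremum norm of `x`. -/
def supNorm (x : Omega1 → ℝ) : ℝ :=
  sSup {r : ℝ | ∃ α : Omega1, r = |x α|}

/-- The ℓ₂ norm of a (finitely supported) `x`. -/
def l2Norm (x : Omega1 → ℝ) : ℝ :=
  Real.sqrt (∑ᶠ α : Omega1, (x α) ^ 2)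

/-- `𝒜` is a family of finite subsets of `ω₁` closed under subsets
and containing all singletons. -/
def IsGoodFamily (𝒜 : Set (Finset Omega1)) : Prop :=
  (∀ A ∈ 𝒜, ∀ B : Finset Omega1, B ⊆ A → B ∈ 𝒜) ∧
    ∀ α : Omega1, ({α} : Finset Omega1) ∈ 𝒜

lemma countable_Iio_omega1 (ξ : Omega1) : (Set.Iio ξ).Countable := by
  haveI h : IsWellOrder Omega1 (· < ·) := @isWellOrder_lt Omega1 _ _
  rw [Cardinal.countable_iff_lt_aleph_one]
  have h1 := Ordinal.typein_lt_self (o := Ordinal.omega 1) ξ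
  have h2 : (Ordinal.typein ((· < ·) : Omega1 → Omega1 → Prop) ξ).card < Cardinal.aleph 1 :=
    Cardinal.lt_ord.mp (by rw [Cardinal.ord_aleph]; exact h1)
  exact h2

lemma not_countable_univ_omega1 : ¬(Set.univ : Set Omega1).Countable := by
  rw [Cardinal.countable_iff_lt_aleph_one, Cardinal.mk_univ, Cardinal.mk_toType,
    Ordinal.card_omega]
  exact lt_irrefl _

lemma nonempty_omega1 : Nonempty Omega1 := by
  rw [Ordinal.toType_nonempty_iff_ne_zero]
  intro h
  have h2 := Ordinal.card_omega 1
  rw [h] at h2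
  simp at h2
  exact (Cardinal.aleph_pos 1).ne' h2.symm

/-- Key combinatorial lemma: if every injective sequence into `S` contains an
`E`-edge, then some `v ∈ S` has uncountable `E`-neighborhood in `S`. -/
lemma key_lemma (E : Omega1 → Omega1 → Prop) (hsymm : ∀ a b, E a b → E b a)
    (S : Set Omega1) (hS : ¬S.Countable)
    (hedge : ∀ f : Omega1 → Omega1, Function.Injective f → (∀ ξ, f ξ ∈ S) →
      ∃ ξ η, ξ ≠ η ∧ E (f ξ) (f η)) :
    ∃ v ∈ S, ¬({w ∈ S | E v w}).Countable := by
  classical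
  by_contra hcon
  push_neg at hcon
  set bad : Omega1 → Set Omega1 :=
    fun v => insert v {w ∈ S | E v w ∧ ({u ∈ S | E v u}).Countable} with hbaddef
  have hbadc : ∀ v, (bad v).Countable := by
    intro v
    apply Set.Countable.insert
    by_cases h : ({u ∈ S | E v u}).Countable
    · refine Set.Countable.mono ?_ h
      intro w hw
      exact ⟨hw.1, hw.2.1⟩
    · have he : {w ∈ S | E v w ∧ ({u ∈ S | E v u}).Countable} = ∅ := by
        rw [Set.eq_empty_iff_forall_notMem]
        exact fun w hw => h hw.2.2
      rw [he]
      exact Set.countable_empty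
  have hdiff : ∀ T : Set Omega1, T.Countable → (S \ T).Nonempty := by
    intro T hT
    rw [Set.nonempty_iff_ne_empty]
    intro h
    exact hS (Set.Countable.mono (Set.diff_eq_empty.mp h) hT)
  have wf : WellFounded ((· < ·) : Omega1 → Omega1 → Prop) := wellFounded_lt
  have hUc : ∀ (ξ : Omega1) (g : (η : Omega1) → η < ξ → Omega1),
      (⋃ η : Set.Iio ξ, bad (g η.1 η.2)).Countable := by
    intro ξ g
    haveI := (countable_Iio_omega1 ξ).to_subtype
    exact Set.countable_iUnion (fun η => hbadc _)
  set F : (ξ : Omega1) → ((η : Omega1) → η < ξ → Omega1) → Omega1 :=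
    fun ξ IH => (hdiff _ (hUc ξ IH)).choose with hFdef
  set f : Omega1 → Omega1 := wf.fix F with hfdef
  have hfix : ∀ ξ, f ξ = F ξ (fun η _ => f η) := fun ξ => wf.fix_eq F ξ
  have hspec : ∀ ξ, f ξ ∈ S \ ⋃ η : Set.Iio ξ, bad (f η.1) := by
    intro ξ
    rw [hfix ξ]
    exact (hdiff _ (hUc ξ (fun η _ => f η))).choose_spec
  have hfS : ∀ ξ, f ξ ∈ S := fun ξ => (hspec ξ).1
  have hnb : ∀ {η ξ : Omega1}, η < ξ → f ξ ∉ bad (f η) := by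
    intro η ξ h hmem
    exact (hspec ξ).2 (Set.mem_iUnion.2 ⟨⟨η, h⟩, hmem⟩)
  have hne : ∀ {η ξ : Omega1}, η < ξ → f ξ ≠ f η := by
    intro η ξ h heq
    apply hnb h
    rw [hbaddef]
    rw [heq]
    exact Set.mem_insert _ _
  have hnE : ∀ {η ξ : Omega1}, η < ξ → ¬E (f η) (f ξ) := by
    intro η ξ h hE
    exact hnb h (Set.mem_insert_of_mem _ ⟨hfS ξ, hE, hcon (f η) (hfS η)⟩)
  have hinj : Function.Injective f := by
    intro a b hab
    by_contra hne'
    rcases lt_or_gt_of_ne hne' with h | h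
    · exact hne h hab.symm
    · exact hne h hab
  obtain ⟨ξ, η, hxy, hE⟩ := hedge f hinj hfS
  rcases lt_or_gt_of_ne hxy with h | h
  · exact hnE h hE
  · exact hnE h (hsymm _ _ hE)

/-- from pairwise disjoint sets `B ξ ∈ 𝒜` one can extract an
infinite `X` with all finite subsets of `⋃_{ξ ∈ X} B ξ` in `𝒜`. -/
theorem stmt18 (𝒜 : Set (Finset Omega1)) (h𝒜 : IsGoodFamily 𝒜)
    (h2gen : ∀ C : Finset Omega1,
      (∀ α ∈ C, ∀ β ∈ C, α ≠ β → ({α, β} : Finset Omega1) ∈ 𝒜) → C ∈ 𝒜)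
    (hcross : ∀ F : Omega1 → Finset Omega1, Function.Injective F →
      (∀ ξ η : Omega1, ξ ≠ η → Disjoint (F ξ) (F η)) →
      ∃ ξ η : Omega1, ξ ≠ η ∧
        ∀ α ∈ F ξ, ∀ β ∈ F η, ({α, β} : Finset Omega1) ∈ 𝒜)
    (B : Omega1 → Finset Omega1)
    (hBdisj : ∀ ξ η : Omega1, ξ ≠ η → Disjoint (B ξ) (B η))
    (hBA : ∀ ξ, B ξ ∈ 𝒜) :
    ∃ X : Set Omega1, X.Infinite ∧
      ∀ s : Finset Omega1,
        (↑s : Set Omega1) ⊆ (⋃ ξ ∈ X, (↑(B ξ) : Set Omega1)) → s ∈ 𝒜 := by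
  classical
  haveI := nonempty_omega1
  set E : Omega1 → Omega1 → Prop :=
    fun ξ η => ∀ α ∈ B ξ, ∀ β ∈ B η, ({α, β} : Finset Omega1) ∈ 𝒜 with hEdef
  have hsymm : ∀ a b, E a b → E b a := by
    intro a b h α hα β hβ
    rw [Finset.pair_comm]
    exact h β hβ α hα
  by_cases hZ : {ξ : Omega1 | B ξ = ∅}.Infinite
  · refine ⟨_, hZ, ?_⟩
    intro s hs
    apply h2gen
    intro α hα β hβ hne
    exfalso
    have := hs hα
    rw [Set.mem_iUnion₂] at this
    obtain ⟨ξ, hξ, hmem⟩ := this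
    rw [hξ] at hmem
    simp at hmem
  · set NE : Set Omega1 := {ξ : Omega1 | B ξ ≠ ∅} with hNEdef
    have hNEunc : ¬NE.Countable := by
      intro h
      apply not_countable_univ_omega1
      have hsub : (Set.univ : Set Omega1) ⊆ {ξ : Omega1 | B ξ = ∅} ∪ NE := by
        intro ξ _
        by_cases h' : B ξ = ∅
        · exact Or.inl h'
        · exact Or.inr h'
      exact Set.Countable.mono hsub
        ((Set.not_infinite.mp hZ).countable.union h)
    have hedge : ∀ S : Set Omega1, S ⊆ NE →
        ∀ f : Omega1 → Omega1, Function.Injective f → (∀ ξ, f ξ ∈ S) →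
        ∃ ξ η, ξ ≠ η ∧ E (f ξ) (f η) := by
      intro S hSNE f hfinj hfS
      have hinj : Function.Injective (fun ξ => B (f ξ)) := by
        intro a b hab
        simp only at hab
        by_contra hne'
        have hfne : f a ≠ f b := fun h => hne' (hfinj h)
        have hd := hBdisj (f a) (f b) hfne
        rw [hab] at hd
        exact hSNE (hfS b) (disjoint_self.mp hd)
      have hdisj : ∀ ξ η : Omega1, ξ ≠ η →
          Disjoint ((fun ξ => B (f ξ)) ξ) ((fun ξ => B (f ξ)) η) :=
        fun ξ η h => hBdisj _ _ (fun he => h (hfinj he))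
      obtain ⟨ξ, η, hne, hcr⟩ := hcross _ hinj hdisj
      exact ⟨ξ, η, hne, hcr⟩
    have step : ∀ S : Set Omega1, S ⊆ NE → ¬S.Countable →
        ∃ v ∈ S, ¬({w ∈ S | E v w ∧ w ≠ v}).Countable := by
      intro S hSNE hSc
      obtain ⟨v, hv, hvc⟩ := key_lemma E hsymm S hSc (hedge S hSNE)
      refine ⟨v, hv, fun hc => hvc ?_⟩
      have hsub : {w ∈ S | E v w} ⊆ insert v {w ∈ S | E v w ∧ w ≠ v} := by
        intro w hw
        by_cases h : w = v
        · rw [h]; exact Set.mem_insert _ _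
        · exact Set.mem_insert_of_mem _ ⟨hw.1, hw.2, h⟩
      exact Set.Countable.mono hsub (hc.insert v)
    have step' : ∀ S : Set Omega1, ∃ v : Omega1, (S ⊆ NE ∧ ¬S.Countable) →
        v ∈ S ∧ ¬({w ∈ S | E v w ∧ w ≠ v}).Countable := by
      intro S
      by_cases h : S ⊆ NE ∧ ¬S.Countable
      · obtain ⟨v, hv1, hv2⟩ := step S h.1 h.2
        exact ⟨v, fun _ => ⟨hv1, hv2⟩⟩
      · exact ⟨Classical.arbitrary Omega1, fun hcon => absurd hcon h⟩
    set pick : Set Omega1 → Omega1 := fun S => (step' S).choose with hpickdef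
    set nextS : Set Omega1 → Set Omega1 :=
      fun S => {w ∈ S | E (pick S) w ∧ w ≠ pick S} with hnextdef
    set Sseq : ℕ → Set Omega1 := fun n => nextS^[n] NE with hSseqdef
    have hSsucc : ∀ n, Sseq (n + 1) = nextS (Sseq n) := fun n =>
      Function.iterate_succ_apply' nextS n NE
    have hinv : ∀ n, Sseq n ⊆ NE ∧ ¬(Sseq n).Countable := by
      intro n
      induction n with
      | zero => exact ⟨subset_rfl, hNEunc⟩
      | succ n ih =>
        have hp := (step' (Sseq n)).choose_spec ih
        rw [hSsucc n]
        exact ⟨fun w hw => ih.1 hw.1, hp.2⟩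
    set v : ℕ → Omega1 := fun n => pick (Sseq n) with hvdef
    have hpick : ∀ n, v n ∈ Sseq n := fun n =>
      ((step' (Sseq n)).choose_spec (hinv n)).1
    have hEdge : ∀ n, ∀ w ∈ Sseq (n + 1), E (v n) w ∧ w ≠ v n := by
      intro n w hw
      rw [hSsucc n] at hw
      exact hw.2
    have hmono : ∀ n m : ℕ, n ≤ m → Sseq m ⊆ Sseq n := by
      intro n m h
      induction m, h using Nat.le_induction with
      | base => exact subset_rfl
      | succ m hm ih =>
        intro w hw
        rw [hSsucc m] at hw
        exact ih hw.1
    have hpair : ∀ n m : ℕ, n < m → E (v n) (v m) ∧ v m ≠ v n := by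
      intro n m h
      exact hEdge n (v m) (hmono (n + 1) m h (hpick m))
    have hvinj : Function.Injective v := by
      intro a b hab
      by_contra hne'
      rcases lt_or_gt_of_ne hne' with h | h
      · exact (hpair a b h).2 hab.symm
      · exact (hpair b a h).2 hab
    refine ⟨Set.range v, Set.infinite_range_of_injective hvinj, ?_⟩
    intro s hs
    apply h2gen
    intro α hα β hβ hab
    have hα' := hs hα
    have hβ' := hs hβ
    rw [Set.mem_iUnion₂] at hα' hβ'
    obtain ⟨ξ, ⟨n, rfl⟩, hαB⟩ := hα'
    obtain ⟨η, ⟨m, rfl⟩, hβB⟩ := hβ'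
    rw [Finset.mem_coe] at hαB hβB
    rcases lt_trichotomy n m with h | h | h
    · exact (hpair n m h).1 α hαB β hβB
    · subst h
      refine h𝒜.1 (B (v n)) (hBA (v n)) _ ?_
      exact Finset.insert_subset_iff.mpr ⟨hαB, Finset.singleton_subset_iff.mpr hβB⟩
    · rw [Finset.pair_comm]
      exact (hpair m n h).1 β hβB α hαB

end
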